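/- For every nonnegative integer m, setting a = -1/2 - m (so 4a+1 = -1-4m and 4a = -2-4m), the terminating hypergeometric sum satisfies ∑_{n=0}^{4m+1} [(a)_n (4a+1)_n / ((4a)_n · n!)] · (4/3)^n = (-1)^m 2^{8m+1} (1/2)_m (5/2)_{3m} / (3^{4m+1} (3)_{4m}). -/

import Mathlib

open Polynomial

private noncomputable def tt (m n : ℕ) : ℚ :=
  ((ascPochhammer ℚ n).eval (-1/2 - (m : ℚ)) *
        (ascPochhammer ℚ n).eval (4 * (-1/2 - (m : ℚ)) + 1) /
        ((ascPochhammer ℚ n).eval (4 * (-1/2 - (m : ℚ))) * (n.factorial : ℚ))) * (4 / 3 : ℚ) ^ n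

private lemma poch_split (j k : ℕ) (x : ℚ) :
    (ascPochhammer ℚ (j + k)).eval x =
      (ascPochhammer ℚ j).eval x * (ascPochhammer ℚ k).eval (x + j) := by
  rw [← ascPochhammer_mul]
  simp [eval_comp]

private lemma poch_refl (n : ℕ) : ∀ x : ℚ,
    (ascPochhammer ℚ n).eval (-x - n + 1) = (-1) ^ n * (ascPochhammer ℚ n).eval x := by
  induction n with
  | zero => intro x; simp
  | succ n ih =>
    intro x
    have h1 : (-x - (↑(n+1) : ℚ) + 1) = (-(x+1) - n + 1) := by push_cast; ring
    rw [ascPochhammer_succ_eval, h1, ih (x+1), ascPochhammer_succ_left]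
    simp only [eval_mul, eval_comp, eval_X, eval_add, eval_one]
    have h2 : (-(x+1) - (n:ℚ) + 1 + n) = -x := by ring
    rw [h2, pow_succ]
    ring

private lemma poch_one (n : ℕ) : (ascPochhammer ℚ n).eval 1 = (n.factorial : ℚ) := by
  induction n with
  | zero => simp
  | succ n ih =>
    rw [ascPochhammer_succ_eval, ih, Nat.factorial_succ]
    push_cast; ring

private lemma poch_two (n : ℕ) : (ascPochhammer ℚ n).eval 2 = ((n+1).factorial : ℚ) := by
  induction n with
  | zero => simp
  | succ n ih =>
    have hf : (n+1+1).factorial = (n+1+1) * (n+1).factorial := Nat.factorial_succ _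
    rw [ascPochhammer_succ_eval, ih, hf]
    push_cast; ring

private lemma poch_c_ne (m : ℕ) : ∀ N, N ≤ 4*m+2 →
    (ascPochhammer ℚ N).eval (-2 - 4*(m:ℚ)) ≠ 0 := by
  intro N
  induction N with
  | zero => intro _; simp
  | succ N ih =>
    intro hN
    rw [ascPochhammer_succ_eval]
    refine mul_ne_zero (ih (by omega)) ?_
    intro h
    have hq : (N:ℚ) = 4*m+2 := by linarith
    have : N = 4*m+2 := by exact_mod_cast hq
    omega

private lemma cast_ne_helper (m N k : ℕ) (h : N ≠ k) : (N:ℚ) - (k:ℚ) ≠ 0 := by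
  intro hc
  have : (N:ℚ) = k := by linarith
  exact h (by exact_mod_cast this)

private lemma partial_sum (m : ℕ) : ∀ N, N ≤ 4*m+1 →
    ∑ n ∈ Finset.range (N+1), tt m n
      = tt m N * (4*(N:ℚ) - (4*(m:ℚ)+2)) / ((N:ℚ) - (4*(m:ℚ)+2)) := by
  intro N
  induction N with
  | zero =>
    intro _
    have hne : (0:ℚ) - (4*(m:ℚ)+2) ≠ 0 := by
      have := Nat.cast_nonneg (α := ℚ) m; intro h; linarith
    rw [Finset.sum_range_one]
    have h0 : tt m 0 = 1 := by simp [tt]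
    rw [h0, Nat.cast_zero, one_mul,
      show (4*(0:ℚ) - (4*(m:ℚ)+2)) = ((0:ℚ) - (4*(m:ℚ)+2)) from by ring, div_self hne]
  | succ N ih =>
    intro hN
    rw [Finset.sum_range_succ, ih (by omega)]
    have harg : (4 : ℚ) * (-1/2 - (m:ℚ)) = -2 - 4*(m:ℚ) := by ring
    simp only [tt, harg, ascPochhammer_succ_eval, Nat.factorial_succ, Nat.cast_succ,
      Nat.cast_mul, pow_succ]
    have hC : (ascPochhammer ℚ N).eval (-2 - 4*(m:ℚ)) ≠ 0 := poch_c_ne m N (by omega)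
    have hF : ((N.factorial : ℚ)) ≠ 0 := by
      exact_mod_cast Nat.factorial_ne_zero N
    have hN1 : ((N:ℚ) + 1) ≠ 0 := by positivity
    have hcN : (-2 - 4*(m:ℚ) + N) ≠ 0 := by
      intro h
      have hq : (N:ℚ) = 4*m+2 := by linarith
      have : N = 4*m+2 := by exact_mod_cast hq
      omega
    have hd1 : (N:ℚ) - (4*(m:ℚ)+2) ≠ 0 := by
      intro h
      have hq : (N:ℚ) = 4*m+2 := by linarith
      have : N = 4*m+2 := by exact_mod_cast hq
      omega
    have hd2 : (N:ℚ) + 1 - (4*(m:ℚ)+2) ≠ 0 := by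
      intro h
      have hq : (N:ℚ) = 4*m+1 := by linarith
      have : N = 4*m+1 := by exact_mod_cast hq
      omega
    have hd2' : (N:ℚ) + 1 - (4*(m:ℚ)+2) = (N:ℚ) - (4*(m:ℚ)+1) := by ring
    have hd3 : (N:ℚ) - (4*(m:ℚ)+1) ≠ 0 := hd2' ▸ hd2
    have hcN' : (-2 - 4*(m:ℚ) + N) = (N:ℚ) - (4*(m:ℚ)+2) := by ring
    rw [hcN', hd2']
    field_simp
    have e1 : (ascPochhammer ℚ N).eval (-2 - (m:ℚ)*4) ≠ 0 := by rw [mul_comm (m:ℚ) 4]; exact hC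
    have e2 : (N:ℚ) - ((m:ℚ)*4+2) ≠ 0 := by rw [mul_comm (m:ℚ) 4]; exact hd1
    have e3 : (N:ℚ) - ((m:ℚ)*4+1) ≠ 0 := by rw [mul_comm (m:ℚ) 4]; exact hd3
    rw [div_eq_div_iff (mul_ne_zero e1 e2) (mul_ne_zero (mul_ne_zero e1 e2) e3)]
    ring

/-- Formula (1,4,4-1)(i), case `a = -1/2-m`:
`₂F₁(a, 4a+1; 4a; 4/3) = (-1)^m 2^{8m+1} (1/2)_m (5/2)_{3m} / (3^{4m+1} (3)_{4m})`. -/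
theorem case2_half (m : ℕ) :
    ∑ n ∈ Finset.range (4 * m + 1 + 1),
      ((ascPochhammer ℚ n).eval (-1/2 - (m : ℚ)) *
        (ascPochhammer ℚ n).eval (4 * (-1/2 - (m : ℚ)) + 1) /
        ((ascPochhammer ℚ n).eval (4 * (-1/2 - (m : ℚ))) * (n.factorial : ℚ))) * (4 / 3 : ℚ) ^ n
    = (-1 : ℚ) ^ m * (2 : ℚ) ^ (8 * m + 1) * (ascPochhammer ℚ m).eval (1/2 : ℚ) *
        (ascPochhammer ℚ (3 * m)).eval (5/2 : ℚ) /
        ((3 : ℚ) ^ (4 * m + 1) * (ascPochhammer ℚ (4 * m)).eval (3 : ℚ)) := by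
  have key := partial_sum m (4*m+1) le_rfl
  have hsum : ∑ n ∈ Finset.range (4 * m + 1 + 1),
      ((ascPochhammer ℚ n).eval (-1/2 - (m : ℚ)) *
        (ascPochhammer ℚ n).eval (4 * (-1/2 - (m : ℚ)) + 1) /
        ((ascPochhammer ℚ n).eval (4 * (-1/2 - (m : ℚ))) * (n.factorial : ℚ))) * (4 / 3 : ℚ) ^ n
      = ∑ n ∈ Finset.range (4 * m + 1 + 1), tt m n := rfl
  rw [hsum, key]
  -- now evaluate tt m (4m+1)
  have hodd : ((-1 : ℚ)) ^ (4*m+1) = -1 := by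
    rw [pow_succ, show 4*m = 2*(2*m) from by ring, pow_mul]
    norm_num
  -- b-eval
  have hb : (ascPochhammer ℚ (4*m+1)).eval (4 * (-1/2 - (m : ℚ)) + 1)
      = -(((4*m+1).factorial : ℚ)) := by
    have h := poch_refl (4*m+1) 1
    have harg : (-(1:ℚ) - ((4*m+1 : ℕ):ℚ) + 1) = 4 * (-1/2 - (m : ℚ)) + 1 := by
      push_cast; ring
    rw [harg] at h
    rw [h, hodd, poch_one]
    ring
  -- c-eval
  have hc : (ascPochhammer ℚ (4*m+1)).eval (4 * (-1/2 - (m : ℚ)))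
      = -(((4*m+2).factorial : ℚ)) := by
    have h := poch_refl (4*m+1) 2
    have harg : (-(2:ℚ) - ((4*m+1 : ℕ):ℚ) + 1) = 4 * (-1/2 - (m : ℚ)) := by
      push_cast; ring
    rw [harg] at h
    rw [h, hodd, poch_two]
    have : 4*m+1+1 = 4*m+2 := by omega
    rw [this]; ring
  -- a-eval
  have ha : (ascPochhammer ℚ (4*m+1)).eval (-1/2 - (m : ℚ))
      = (-1)^(m+1) * ((ascPochhammer ℚ m).eval (1/2 : ℚ) * ((m:ℚ) + 1/2))
          * (ascPochhammer ℚ (3*m)).eval (1/2 : ℚ) := by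
    have hidx : 4*m+1 = (m+1) + 3*m := by omega
    rw [hidx, poch_split]
    have harg2 : (-1/2 - (m : ℚ) + ((m+1 : ℕ):ℚ)) = 1/2 := by push_cast; ring
    rw [harg2]
    have h := poch_refl (m+1) (1/2)
    have harg3 : (-(1/2:ℚ) - ((m+1 : ℕ):ℚ) + 1) = -1/2 - (m:ℚ) := by push_cast; ring
    rw [harg3] at h
    rw [h, ascPochhammer_succ_eval]
    push_cast
    ring
  -- (5/2)_{3m} relation
  have h52 : (ascPochhammer ℚ (3*m)).eval (5/2 : ℚ)
      = (4/3) * ((ascPochhammer ℚ (3*m)).eval (1/2 : ℚ)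
          * ((3*(m:ℚ)) + 1/2) * ((3*(m:ℚ)) + 3/2)) := by
    have h1 := poch_split 2 (3*m) (1/2)
    have h2 := poch_split (3*m) 2 (1/2)
    have hidx : 2 + 3*m = 3*m + 2 := by omega
    rw [hidx] at h1
    have hp2 : ∀ y : ℚ, (ascPochhammer ℚ 2).eval y = y * (y+1) := by
      intro y
      rw [show (2:ℕ) = 1+1 from rfl, ascPochhammer_succ_eval, ascPochhammer_one]
      simp
    rw [hp2] at h1 h2
    rw [h2] at h1
    have : ((2:ℕ):ℚ) = 2 := by norm_num
    rw [this] at h1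
    have h34 : ((1:ℚ)/2 + 2) = 5/2 := by norm_num
    rw [h34] at h1
    -- h1 : P_{3m}(1/2) * ((1/2+3m)*((1/2+3m)+1)) = (1/2)*(1/2+1) * P_{3m}(5/2)
    push_cast at h1
    nlinarith [h1]
  -- (3)_{4m} relation
  have h3 : (ascPochhammer ℚ (4*m)).eval (3 : ℚ) = ((4*m+2).factorial : ℚ) / 2 := by
    have h1 := poch_split 2 (4*m) 1
    have hidx : 2 + 4*m = 4*m+2 := by omega
    rw [hidx, poch_one] at h1
    have hp2 : (ascPochhammer ℚ 2).eval (1:ℚ) = 2 := by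
      rw [show (2:ℕ) = 1+1 from rfl, ascPochhammer_succ_eval, ascPochhammer_one]
      norm_num
    rw [hp2] at h1
    have : ((1:ℚ) + ((2:ℕ):ℚ)) = 3 := by norm_num
    rw [this] at h1
    linarith
  -- factorial relation
  have hfac : (((4*m+2).factorial : ℚ)) = (4*(m:ℚ)+2) * ((4*m+1).factorial : ℚ) := by
    have : (4*m+2) = (4*m+1) + 1 := by omega
    rw [this, Nat.factorial_succ]
    push_cast; ring
  -- powers
  have hpow : ((4:ℚ)/3) ^ (4*m+1) = (2 * 2^(8*m+1)) / 3^(4*m+1) := by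
    rw [div_pow]
    congr 1
    rw [show (4:ℚ) = 2^2 from by norm_num, ← pow_mul,
      show 2*(4*m+1) = (8*m+1)+1 from by ring, pow_succ]
    ring
  have hF : ((4*m+1).factorial : ℚ) ≠ 0 := by exact_mod_cast Nat.factorial_ne_zero _
  have h3p : ((3:ℚ)) ^ (4*m+1) ≠ 0 := by positivity
  have hm2 : (4*(m:ℚ)+2) ≠ 0 := by positivity
  simp only [tt, ha, hb, hc, h52, h3, hfac, hpow]
  push_cast
  have hd1 : ((4*m+1 : ℕ):ℚ) - (4*(m:ℚ)+2) ≠ 0 := by push_cast; intro h; linarith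
  field_simp
  ring
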